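/- Let B be a reduced abelian p-group, S a finite subgroup of B, and β an ordinal. Let F : (S ∩ B_β ∩ p^{-1}B_{β+2})/(S ∩ B_{β+1}) → P_β(B)/P_{β+1}(B) be the map induced by sending x ∈ S ∩ B_β with px ∈ B_{β+2} to the coset of x − y, where y ∈ B_{β+1} is any element with py = px. Then the following are equivalent: (1) the range of F is not all of P_β(B)/P_{β+1}(B); (2) there exists an element w ∈ P_β(B) of height exactly β which is proper with respect to S. -/

import Mathlib

open Ordinal

/-- Scalar multiplication by `p` as an additive group homomorphism. -/
def pHom (p : ℕ) (G : Type*) [AddCommGroup G] : G →+ G :=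
  AddMonoidHom.mk' (fun x => p • x) (fun a b => smul_add p a b)

@[simp] lemma pHom_apply (p : ℕ) {G : Type*} [AddCommGroup G] (x : G) :
    pHom p G x = p • x := rfl

/-- The Ulm subgroups `G_β`: `G_0 = G`, `G_{β+1} = pG_β`, and intersections at limits. -/
noncomputable def ulmSub (p : ℕ) (G : Type*) [AddCommGroup G] (β : Ordinal.{0}) :
    AddSubgroup G :=
  Ordinal.limitRecOn β ⊤ (fun _ H => AddSubgroup.map (pHom p G) H)
    (fun o _ ih => ⨅ (γ : Ordinal.{0}) (h : γ < o), ih γ h)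

lemma ulmSub_succ (p : ℕ) (G : Type*) [AddCommGroup G] (β : Ordinal.{0}) :
    ulmSub p G (β + 1) = AddSubgroup.map (pHom p G) (ulmSub p G β) := by
  unfold ulmSub
  rw [Ordinal.add_one_eq_succ, Ordinal.limitRecOn_succ]

lemma ulmSub_succ_le (p : ℕ) (G : Type*) [AddCommGroup G] (β : Ordinal.{0}) :
    ulmSub p G (β + 1) ≤ ulmSub p G β := by
  rw [ulmSub_succ]
  rintro x ⟨y, hy, rfl⟩
  simpa using (ulmSub p G β).nsmul_mem hy p

/-- An abelian `p`-group: every element is killed by some power of `p`. -/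
def IsAbelianPGroup (p : ℕ) (G : Type*) [AddCommGroup G] : Prop :=
  ∀ x : G, ∃ n : ℕ, p ^ n • x = 0

/-- The length `λ(G)`: the least ordinal `β` with `G_β = G_{β+1}`. -/
noncomputable def ulmLength (p : ℕ) (G : Type*) [AddCommGroup G] : Ordinal.{0} :=
  sInf {β : Ordinal.{0} | ulmSub p G β = ulmSub p G (β + 1)}

/-- `G` is reduced if `G_{λ(G)} = {0}`. -/
def IsReducedPGroup (p : ℕ) (G : Type*) [AddCommGroup G] : Prop :=
  ulmSub p G (ulmLength p G) = ⊥

/-- `P_β(G) = {x ∈ G_β : px = 0}`. -/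
noncomputable def ulmP (p : ℕ) (G : Type*) [AddCommGroup G] (β : Ordinal.{0}) : AddSubgroup G :=
  (pHom p G).ker ⊓ ulmSub p G β

/-- The quotient `P_β(G)/P_{β+1}(G)` (as a quotient of `P_β(G)` by the subgroup
corresponding to `P_{β+1}(G)`). -/
noncomputable def ulmQuot (p : ℕ) (G : Type*) [AddCommGroup G] (β : Ordinal.{0}) :=
  (ulmP p G β) ⧸ ((ulmP p G (β + 1)).addSubgroupOf (ulmP p G β))

noncomputable instance (p : ℕ) (G : Type*) [AddCommGroup G] (β : Ordinal.{0}) :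
    AddCommGroup (ulmQuot p G β) :=
  inferInstanceAs (AddCommGroup ((ulmP p G β) ⧸ ((ulmP p G (β + 1)).addSubgroupOf (ulmP p G β))))

noncomputable instance (p : ℕ) (G : Type*) [AddCommGroup G] (β : Ordinal.{0}) :
    Module (ZMod p) (ulmQuot p G β) :=
  QuotientAddGroup.zmodModule (by
    intro x
    simp only [AddSubgroup.mem_addSubgroupOf]
    have hx : ((p • x : ulmP p G β) : G) = 0 := by
      have := (AddSubgroup.mem_inf.mp x.2).1
      simp only [AddMonoidHom.mem_ker, pHom_apply] at this
      simpa using this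
    rw [hx]
    exact (ulmP p G (β + 1)).zero_mem)

/-- The Ulm invariant `u_β(G)`: the dimension of `P_β(G)/P_{β+1}(G)` over `ℤ/pℤ`. -/
noncomputable def ulmInvariant (p : ℕ) (G : Type*) [AddCommGroup G] (β : Ordinal.{0}) :
    Cardinal :=
  Module.rank (ZMod p) (ulmQuot p G β)

open Classical in
/-- The height of `x`: the unique ordinal `β` with `x ∈ G_β \ G_{β+1}` if it exists, and `∞`
(= `⊤`) otherwise. -/
noncomputable def height (p : ℕ) {G : Type*} [AddCommGroup G] (x : G) : WithTop Ordinal.{0} :=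
  if ∃ β : Ordinal.{0}, x ∈ ulmSub p G β ∧ x ∉ ulmSub p G (β + 1) then
    ((sInf {β : Ordinal.{0} | x ∈ ulmSub p G β ∧ x ∉ ulmSub p G (β + 1)} : Ordinal.{0}) :
      WithTop Ordinal.{0})
  else ⊤

/-- `d` is proper with respect to `S` if `h(d) ≥ h(d+s)` for every `s ∈ S`. -/
def ProperWRT (p : ℕ) {G : Type*} [AddCommGroup G] (S : AddSubgroup G) (d : G) : Prop :=
  ∀ s ∈ S, height p (d + s) ≤ height p d

/-- The subgroup `S ∩ B_β ∩ p⁻¹B_{β+2}`, where `p⁻¹B_{β+2} = {x : px ∈ B_{β+2}}`. -/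
noncomputable def kapSub (p : ℕ) {B : Type*} [AddCommGroup B] (S : AddSubgroup B)
    (β : Ordinal.{0}) : AddSubgroup B :=
  S ⊓ ulmSub p B β ⊓ (ulmSub p B (β + 2)).comap (pHom p B)

/-- The quotient `(S ∩ B_β ∩ p⁻¹B_{β+2}) / (S ∩ B_{β+1})`. -/
noncomputable def kapQuot (p : ℕ) {B : Type*} [AddCommGroup B] (S : AddSubgroup B)
    (β : Ordinal.{0}) :=
  kapSub p S β ⧸ ((S ⊓ ulmSub p B (β + 1)).addSubgroupOf (kapSub p S β))

noncomputable instance (p : ℕ) {B : Type*} [AddCommGroup B] (S : AddSubgroup B)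
    (β : Ordinal.{0}) : AddCommGroup (kapQuot p S β) :=
  inferInstanceAs
    (AddCommGroup (kapSub p S β ⧸ ((S ⊓ ulmSub p B (β + 1)).addSubgroupOf (kapSub p S β))))

noncomputable instance (p : ℕ) {B : Type*} [AddCommGroup B] (S : AddSubgroup B)
    (β : Ordinal.{0}) : Module (ZMod p) (kapQuot p S β) :=
  QuotientAddGroup.zmodModule (by
    intro x
    have hx := x.2
    simp only [kapSub, AddSubgroup.mem_inf, AddSubgroup.mem_comap, pHom_apply] at hx
    simp only [AddSubgroup.mem_addSubgroupOf, AddSubgroup.mem_inf]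
    have hc : ((p • x : kapSub p S β) : B) = p • (x : B) := rfl
    rw [hc]
    refine ⟨S.nsmul_mem hx.1.1 p, ?_⟩
    have h2 : (β + 2 : Ordinal.{0}) = (β + 1) + 1 := by
      rw [add_assoc]; norm_num
    exact ulmSub_succ_le p B (β + 1) (by rw [← h2]; exact hx.2))

section Aux

variable (p : ℕ) {G : Type*} [AddCommGroup G]

lemma ulmSub_zero' : ulmSub p G 0 = ⊤ := by
  unfold ulmSub
  rw [Ordinal.limitRecOn_zero]

lemma ulmSub_limit' {o : Ordinal.{0}} (ho : Order.IsSuccLimit o) :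
    ulmSub p G o = ⨅ (γ : Ordinal.{0}) (_ : γ < o), ulmSub p G γ := by
  unfold ulmSub
  rw [Ordinal.limitRecOn_limit _ _ _ _ ho]

lemma ulmSub_anti : ∀ {γ δ : Ordinal.{0}}, γ ≤ δ → ulmSub p G δ ≤ ulmSub p G γ := by
  have key : ∀ δ : Ordinal.{0}, ∀ γ < δ, ulmSub p G δ ≤ ulmSub p G γ := by
    intro δ
    induction δ using Ordinal.induction with
    | h δ ih =>
      rcases Ordinal.zero_or_succ_or_isSuccLimit δ with rfl | ⟨σ, rfl⟩ | hl
      · intro γ hγ; exact absurd hγ (by simp)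
      · intro γ hγ
        have h1 : ulmSub p G (Order.succ σ) ≤ ulmSub p G σ := by
          rw [← Ordinal.add_one_eq_succ]; exact ulmSub_succ_le p G σ
        rcases (Order.lt_succ_iff.mp hγ).lt_or_eq with h | rfl
        · exact h1.trans (ih σ (Order.lt_succ σ) γ h)
        · exact h1
      · intro γ hγ
        rw [ulmSub_limit' p hl]
        exact iInf_le_of_le γ (iInf_le _ hγ)
  intro γ δ h
  rcases h.lt_or_eq with h | rfl
  · exact key δ γ h
  · exact le_rfl

lemma mem_ulmSub_all {x : G}
    (h : ¬ ∃ β : Ordinal.{0}, x ∈ ulmSub p G β ∧ x ∉ ulmSub p G (β + 1)) :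
    ∀ δ : Ordinal.{0}, x ∈ ulmSub p G δ := by
  intro δ
  induction δ using Ordinal.induction with
  | h δ ih =>
    rcases Ordinal.zero_or_succ_or_isSuccLimit δ with rfl | ⟨σ, rfl⟩ | hl
    · rw [ulmSub_zero']; trivial
    · have hσ : x ∈ ulmSub p G σ := ih σ (Order.lt_succ σ)
      by_contra hc
      exact h ⟨σ, hσ, by rwa [Ordinal.add_one_eq_succ]⟩
    · rw [ulmSub_limit' p hl]
      simp only [AddSubgroup.mem_iInf]
      exact fun γ hγ => ih γ hγ

lemma height_eq_of_mem (x : G) {β : Ordinal.{0}} (h1 : x ∈ ulmSub p G β)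
    (h2 : x ∉ ulmSub p G (β + 1)) : height p x = (β : WithTop Ordinal.{0}) := by
  classical
  have hex : ∃ β : Ordinal.{0}, x ∈ ulmSub p G β ∧ x ∉ ulmSub p G (β + 1) := ⟨β, h1, h2⟩
  rw [height, if_pos hex]
  congr 1
  have hmem : β ∈ {β : Ordinal.{0} | x ∈ ulmSub p G β ∧ x ∉ ulmSub p G (β + 1)} := ⟨h1, h2⟩
  refine le_antisymm (csInf_le' hmem) ?_
  by_contra hc
  push_neg at hc
  obtain ⟨h3, h4⟩ := csInf_mem (⟨β, hmem⟩ : Set.Nonempty _)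
  have hle : sInf {β : Ordinal.{0} | x ∈ ulmSub p G β ∧ x ∉ ulmSub p G (β + 1)} + 1 ≤ β := by
    rw [Ordinal.add_one_eq_succ]; exact Order.succ_le_of_lt hc
  exact h4 (ulmSub_anti p hle h1)

lemma le_height_of_mem {x : G} {γ : Ordinal.{0}} (h : x ∈ ulmSub p G γ) :
    (γ : WithTop Ordinal.{0}) ≤ height p x := by
  classical
  rw [height]
  split_ifs with hex
  · rw [WithTop.coe_le_coe]
    by_contra hc
    push_neg at hc
    obtain ⟨h3, h4⟩ := csInf_mem (Set.nonempty_def.mpr hex)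
    have hle : sInf {β : Ordinal.{0} | x ∈ ulmSub p G β ∧ x ∉ ulmSub p G (β + 1)} + 1 ≤ γ := by
      rw [Ordinal.add_one_eq_succ]; exact Order.succ_le_of_lt hc
    exact absurd (ulmSub_anti p hle h) h4
  · exact le_top

lemma mem_of_le_height {x : G} {γ : Ordinal.{0}}
    (h : (γ : WithTop Ordinal.{0}) ≤ height p x) : x ∈ ulmSub p G γ := by
  classical
  rw [height] at h
  split_ifs at h with hex
  · exact ulmSub_anti p (WithTop.coe_le_coe.mp h) (csInf_mem (Set.nonempty_def.mpr hex)).1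
  · exact mem_ulmSub_all p hex γ

end Aux

lemma ulmSub_two_succ (p : ℕ) (B : Type*) [AddCommGroup B] (β : Ordinal.{0}) :
    ulmSub p B (β + 2) = AddSubgroup.map (pHom p B) (ulmSub p B (β + 1)) := by
  have h2 : (β + 2 : Ordinal.{0}) = (β + 1) + 1 := by rw [add_assoc]; norm_num
  rw [h2, ulmSub_succ]

/-- Kaplansky's Lemma 13: the induced map `F` fails to be surjective onto
`P_β(B)/P_{β+1}(B)` iff there is an element of `P_β(B)` of height exactly `β` which is
proper with respect to `S`. -/
theorem kaplansky_lemma13 (p : ℕ) (hp : p.Prime) (B : Type) [AddCommGroup B]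
    (hB : IsAbelianPGroup p B) (hred : IsReducedPGroup p B)
    (S : AddSubgroup B) (hS : (S : Set B).Finite) (β : Ordinal.{0})
    (F : kapQuot p S β →ₗ[ZMod p] ulmQuot p B β)
    (hF : ∀ (x : B) (hx : x ∈ kapSub p S β) (y : B), y ∈ ulmSub p B (β + 1) →
      p • y = p • x → ∀ hxy : x - y ∈ ulmP p B β,
      F (QuotientAddGroup.mk (⟨x, hx⟩ : kapSub p S β)) =
        QuotientAddGroup.mk (⟨x - y, hxy⟩ : ulmP p B β)) :
    ¬ Function.Surjective F ↔
      ∃ w ∈ ulmP p B β, (w ∈ ulmSub p B β ∧ w ∉ ulmSub p B (β + 1)) ∧ ProperWRT p S w := by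
  constructor
  · intro hNS
    obtain ⟨c, hc⟩ : ∃ c, c ∉ Set.range F := by
      by_contra h
      push_neg at h
      exact hNS fun c => h c
    obtain ⟨z', rfl⟩ := QuotientAddGroup.mk_surjective c
    set z : B := (z' : B) with hz_def
    have hzker : p • z = 0 := by
      have := z'.2.1
      simpa [pHom] using this
    have hzβ : z ∈ ulmSub p B β := z'.2.2
    have hz1 : z ∉ ulmSub p B (β + 1) := by
      intro hmem
      apply hc
      refine ⟨0, ?_⟩
      rw [map_zero]
      symm
      rw [show ((0 : ulmQuot p B β)) = QuotientAddGroup.mk 0 from rfl]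
      refine QuotientAddGroup.eq.mpr ?_
      refine AddSubgroup.mem_addSubgroupOf.mpr ?_
      simpa using (show (z : B) ∈ ulmP p B (β + 1) from ⟨z'.2.1, hmem⟩)
    obtain ⟨s₀, hs₀S, hs₀max'⟩ : ∃ a ∈ (S : Set B), ∀ a' ∈ (S : Set B),
        height p (z + a) ≤ height p (z + a') → height p (z + a) = height p (z + a') := by
      obtain ⟨a, ha, hmax⟩ := Set.exists_max_image _ (fun s => height p (z + s)) hS ⟨0, S.zero_mem⟩
      exact ⟨a, ha, fun a' ha' h => le_antisymm h (hmax a' ha')⟩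
    have hs₀max : ∀ s ∈ S, height p (z + s) ≤ height p (z + s₀) := by
      intro s hs
      by_contra hlt
      push_neg at hlt
      exact absurd (hs₀max' s hs hlt.le) hlt.ne
    by_cases hcase : height p (z + s₀) ≤ height p z
    · exact ⟨z, z'.2, ⟨hzβ, hz1⟩, fun s hs => (hs₀max s hs).trans hcase⟩
    · exfalso
      push_neg at hcase
      have hzht : height p z = (β : WithTop Ordinal.{0}) := height_eq_of_mem p z hzβ hz1
      have hge : ((β + 1 : Ordinal.{0}) : WithTop Ordinal.{0}) ≤ height p (z + s₀) := by
        rcases hh : height p (z + s₀) with _ | γ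
        · exact le_top
        · rw [hzht, hh] at hcase
          have hlt : β < γ := WithTop.coe_lt_coe.mp hcase
          have hle : (β + 1 : Ordinal.{0}) ≤ γ := by
            rw [Ordinal.add_one_eq_succ]; exact Order.succ_le_of_lt hlt
          exact WithTop.coe_le_coe.mpr hle
      have hmem1 : z + s₀ ∈ ulmSub p B (β + 1) := mem_of_le_height p hge
      set x : B := -s₀ with hx_def
      have hps : p • (z + s₀) ∈ ulmSub p B (β + 2) := by
        rw [ulmSub_two_succ]
        exact ⟨z + s₀, hmem1, rfl⟩
      have hpx : p • x = -(p • (z + s₀)) := by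
        rw [smul_add, hzker, zero_add, hx_def, smul_neg]
      have hx : x ∈ kapSub p S β := by
        rw [kapSub, AddSubgroup.mem_inf, AddSubgroup.mem_inf, AddSubgroup.mem_comap]
        refine ⟨⟨S.neg_mem hs₀S, ?_⟩, ?_⟩
        · have heq : x = z - (z + s₀) := by rw [hx_def]; abel
          rw [heq]
          exact (ulmSub p B β).sub_mem hzβ (ulmSub_succ_le p B β hmem1)
        · rw [pHom_apply, hpx]
          exact (ulmSub p B (β + 2)).neg_mem hps
      set y : B := -(z + s₀) with hy_def
      have hy : y ∈ ulmSub p B (β + 1) := (ulmSub p B (β + 1)).neg_mem hmem1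
      have hpy : p • y = p • x := by
        rw [hpx, hy_def, smul_neg]
      have hxyz : x - y = z := by rw [hx_def, hy_def]; abel
      have hxy : x - y ∈ ulmP p B β := by rw [hxyz]; exact z'.2
      apply hc
      refine ⟨QuotientAddGroup.mk ⟨x, hx⟩, ?_⟩
      rw [hF x hx y hy hpy hxy]
      congr 1
      exact Subtype.ext hxyz
  · rintro ⟨w, hwP, ⟨hwβ, hw1⟩, hprop⟩ hsurj
    obtain ⟨c, hc⟩ := hsurj (QuotientAddGroup.mk ⟨w, hwP⟩)
    obtain ⟨⟨x, hx⟩, rfl⟩ := QuotientAddGroup.mk_surjective c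
    have hx2 := hx
    rw [kapSub, AddSubgroup.mem_inf, AddSubgroup.mem_inf, AddSubgroup.mem_comap] at hx2
    obtain ⟨⟨hxS, hxβ⟩, hxp⟩ := hx2
    have hpx2 : (pHom p B) x ∈ ulmSub p B (β + 2) := hxp
    rw [ulmSub_two_succ] at hpx2
    obtain ⟨y, hy, hpy⟩ := hpx2
    have hpy' : p • y = p • x := by simpa using hpy
    have hxy : x - y ∈ ulmP p B β := by
      refine ⟨AddMonoidHom.mem_ker.mpr ?_, (ulmSub p B β).sub_mem hxβ (ulmSub_succ_le p B β hy)⟩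
      rw [pHom_apply, smul_sub, hpy', _root_.sub_self]
    rw [hF x hx y hy hpy' hxy] at hc
    replace hc := QuotientAddGroup.eq.mp hc
    have hc' : (-(x - y) + w : B) ∈ ulmP p B (β + 1) :=
      AddSubgroup.mem_addSubgroupOf.mp hc
    have hwx : w + (-x) ∈ ulmSub p B (β + 1) := by
      have h1 : (-(x - y) + w : B) ∈ ulmSub p B (β + 1) := hc'.2
      have heq : w + (-x) = (-(x - y) + w) - y := by abel
      rw [heq]
      exact (ulmSub p B (β + 1)).sub_mem h1 hy
    have h1 : ((β + 1 : Ordinal.{0}) : WithTop Ordinal.{0}) ≤ height p (w + (-x)) :=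
      le_height_of_mem p hwx
    have h2 : height p (w + (-x)) ≤ height p w := hprop _ (S.neg_mem hxS)
    rw [height_eq_of_mem p w hwβ hw1] at h2
    have h3 : (β + 1 : Ordinal.{0}) ≤ β := WithTop.coe_le_coe.mp (h1.trans h2)
    rw [Ordinal.add_one_eq_succ] at h3
    exact absurd (Order.succ_le_iff.mp h3) (lt_irrefl β)
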